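/- The function f(x) = ( (2/3)·(log(1/(2x)))^{3/2} ) / ( log(1/x)·√(log(1 + 1/x)) ) satisfies f(x) ≤ 2/3 for all x ∈ (0, 1/2), and f is decreasing on the interval (0, 1/2) (i.e. if 0 < x₁ ≤ x₂ < 1/2 then f(x₂) ≤ f(x₁)). Moreover f(x) → 2/3 as x → 0⁺. -/

import Mathlib

open Real Filter

lemma aux_a {x : ℝ} (hx0 : 0 < x) :
    Real.log (1/(2*x)) = Real.log (1/x) - Real.log 2 := by
  rw [one_div, one_div, Real.log_inv, Real.log_inv, Real.log_mul two_ne_zero hx0.ne']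
  ring

lemma aux_m {x : ℝ} (hx0 : 0 < x) :
    Real.log (1 + 1/x) = Real.log (1/x) + Real.log (1 + x) := by
  have h : 1 + 1/x = (1+x) / x := by field_simp; ring
  rw [h, Real.log_div (by positivity) hx0.ne', one_div, Real.log_inv]
  ring

lemma aux_eq {x : ℝ} (hx0 : 0 < x) (hx2 : x < 1/2) :
    (2/3) * Real.log (1/(2*x)) ^ ((3:ℝ)/2) /
      (Real.log (1/x) * Real.sqrt (Real.log (1 + 1/x)))
    = (2/3) * (Real.log (1/(2*x)) / Real.log (1/x)) *
        Real.sqrt (Real.log (1/(2*x)) / Real.log (1 + 1/x)) := by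
  have ha : 0 < Real.log (1/(2*x)) := Real.log_pos (by rw [lt_div_iff₀ (by positivity)]; linarith)
  have hL : 0 < Real.log (1/x) := Real.log_pos (by rw [lt_div_iff₀ hx0]; linarith)
  have hm : 0 < Real.log (1 + 1/x) := Real.log_pos (by
    have : 0 < 1/x := by positivity
    linarith)
  have hms : 0 < Real.sqrt (Real.log (1 + 1/x)) := Real.sqrt_pos.mpr hm
  rw [show ((3:ℝ)/2) = 1 + 1/2 by norm_num, Real.rpow_add ha, Real.rpow_one,
    ← Real.sqrt_eq_rpow, Real.sqrt_div ha.le]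
  field_simp

lemma aux_pos {x : ℝ} (hx0 : 0 < x) (hx2 : x < 1/2) :
    0 < Real.log (1/(2*x)) ∧ 0 < Real.log (1/x) ∧ 0 < Real.log (1 + 1/x) := by
  refine ⟨Real.log_pos (by rw [lt_div_iff₀ (by positivity)]; linarith),
    Real.log_pos (by rw [lt_div_iff₀ hx0]; linarith),
    Real.log_pos (by nlinarith [one_div_pos.mpr hx0])⟩

theorem stmt_9 :
    (∀ x ∈ Set.Ioo (0:ℝ) (1/2),
      (2/3) * Real.log (1/(2*x)) ^ ((3:ℝ)/2) /
        (Real.log (1/x) * Real.sqrt (Real.log (1 + 1/x))) ≤ 2/3) ∧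
    (∀ x₁ x₂ : ℝ, 0 < x₁ → x₁ ≤ x₂ → x₂ < 1/2 →
      (2/3) * Real.log (1/(2*x₂)) ^ ((3:ℝ)/2) /
        (Real.log (1/x₂) * Real.sqrt (Real.log (1 + 1/x₂))) ≤
      (2/3) * Real.log (1/(2*x₁)) ^ ((3:ℝ)/2) /
        (Real.log (1/x₁) * Real.sqrt (Real.log (1 + 1/x₁)))) ∧
    Filter.Tendsto
      (fun x : ℝ => (2/3) * Real.log (1/(2*x)) ^ ((3:ℝ)/2) /
        (Real.log (1/x) * Real.sqrt (Real.log (1 + 1/x))))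
      (nhdsWithin 0 (Set.Ioi 0)) (nhds (2/3)) := by
  refine ⟨?_, ?_, ?_⟩
  · -- bound
    rintro x ⟨hx0, hx2⟩
    obtain ⟨ha, hL, hm⟩ := aux_pos hx0 hx2
    rw [aux_eq hx0 hx2]
    have haL : Real.log (1/(2*x)) ≤ Real.log (1/x) := by
      have := Real.log_pos (show (1:ℝ) < 2 by norm_num)
      rw [aux_a hx0]; linarith
    have ham : Real.log (1/(2*x)) ≤ Real.log (1 + 1/x) := by
      have := Real.log_nonneg (show (1:ℝ) ≤ 1 + x by linarith)
      rw [aux_a hx0, aux_m hx0]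
      have := Real.log_pos (show (1:ℝ) < 2 by norm_num)
      linarith
    have hp : Real.log (1/(2*x)) / Real.log (1/x) ≤ 1 := (div_le_one hL).mpr haL
    have hq : Real.sqrt (Real.log (1/(2*x)) / Real.log (1 + 1/x)) ≤ 1 :=
      Real.sqrt_le_one.mpr ((div_le_one hm).mpr ham)
    calc (2/3) * (Real.log (1/(2*x)) / Real.log (1/x)) *
          Real.sqrt (Real.log (1/(2*x)) / Real.log (1 + 1/x))
        ≤ (2/3) * 1 * 1 := by
          apply mul_le_mul (by nlinarith) hq (Real.sqrt_nonneg _) (by norm_num)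
      _ = 2/3 := by norm_num
  · -- monotone
    rintro x₁ x₂ hx1 h12 hx2
    have hx1' : x₁ < 1/2 := lt_of_le_of_lt h12 hx2
    have hx2' : 0 < x₂ := lt_of_lt_of_le hx1 h12
    obtain ⟨ha1, hL1, hm1⟩ := aux_pos hx1 hx1'
    obtain ⟨ha2, hL2, hm2⟩ := aux_pos hx2' hx2
    rw [aux_eq hx1 hx1', aux_eq hx2' hx2]
    have hL21 : Real.log (1/x₂) ≤ Real.log (1/x₁) :=
      Real.log_le_log (by positivity) (by gcongr)
    have hm21 : Real.log (1 + 1/x₂) ≤ Real.log (1 + 1/x₁) :=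
      Real.log_le_log (by positivity) (by gcongr)
    have hd12 : Real.log (1 + x₁) ≤ Real.log (1 + x₂) :=
      Real.log_le_log (by positivity) (by linarith)
    have hd1 : 0 ≤ Real.log (1 + x₁) := Real.log_nonneg (by linarith)
    have hc : 0 < Real.log 2 := Real.log_pos (by norm_num)
    have hp : Real.log (1/(2*x₂)) / Real.log (1/x₂) ≤
        Real.log (1/(2*x₁)) / Real.log (1/x₁) := by
      rw [aux_a hx1, aux_a hx2', div_le_div_iff₀ hL2 hL1]
      nlinarith [mul_le_mul_of_nonneg_left hL21 hc.le]
    have hq : Real.log (1/(2*x₂)) / Real.log (1 + 1/x₂) ≤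
        Real.log (1/(2*x₁)) / Real.log (1 + 1/x₁) := by
      have k1 : Real.log (1/(2*x₁)) = Real.log (1 + 1/x₁) - (Real.log 2 + Real.log (1+x₁)) := by
        rw [aux_a hx1, aux_m hx1]; ring
      have k2 : Real.log (1/(2*x₂)) = Real.log (1 + 1/x₂) - (Real.log 2 + Real.log (1+x₂)) := by
        rw [aux_a hx2', aux_m hx2']; ring
      rw [k1, k2, div_le_div_iff₀ hm2 hm1]
      nlinarith [mul_nonneg (by linarith : (0:ℝ) ≤ Real.log 2 + Real.log (1+x₂))
          (sub_nonneg.mpr hm21),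
        mul_nonneg (sub_nonneg.mpr (by linarith : Real.log 2 + Real.log (1+x₁) ≤
          Real.log 2 + Real.log (1+x₂))) hm2.le]
    apply mul_le_mul (by nlinarith) (Real.sqrt_le_sqrt hq) (Real.sqrt_nonneg _)
      (by positivity)
  · -- limit
    have hmem : Set.Ioo (0:ℝ) (1/2) ∈ nhdsWithin 0 (Set.Ioi 0) :=
      Ioo_mem_nhdsGT_of_mem (by norm_num)
    have hLtop : Tendsto (fun x:ℝ => Real.log (1/x)) (nhdsWithin 0 (Set.Ioi 0)) atTop := by
      have h1 : (fun x:ℝ => Real.log (1/x)) = fun x => -Real.log x :=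
        funext fun x => by rw [one_div, Real.log_inv]
      rw [h1]
      exact tendsto_neg_atBot_atTop.comp Real.tendsto_log_nhdsGT_zero
    have hmtop : Tendsto (fun x:ℝ => Real.log (1 + 1/x)) (nhdsWithin 0 (Set.Ioi 0)) atTop := by
      apply tendsto_atTop_mono' _ _ hLtop
      filter_upwards [self_mem_nhdsWithin] with x hx
      have hx' : (0:ℝ) < x := hx
      exact Real.log_le_log (by positivity) (by linarith [one_div_pos.mpr hx'])
    have hdzero : Tendsto (fun x:ℝ => Real.log (1 + x)) (nhdsWithin 0 (Set.Ioi 0)) (nhds 0) := by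
      have h1 : Tendsto (fun x:ℝ => 1 + x) (nhdsWithin 0 (Set.Ioi 0)) (nhds 1) := by
        have h0 : Tendsto (fun x:ℝ => 1 + x) (nhds 0) (nhds (1 + 0)) :=
          (continuous_const.add continuous_id).tendsto 0
        simpa using h0.mono_left nhdsWithin_le_nhds
      have := (Real.continuousAt_log one_ne_zero).tendsto.comp h1
      simpa [Function.comp_def] using this
    have T1 : Tendsto (fun x:ℝ => Real.log (1/(2*x)) / Real.log (1/x))
        (nhdsWithin 0 (Set.Ioi 0)) (nhds 1) := by
      apply Tendsto.congr' _ (show Tendsto (fun x:ℝ => 1 - Real.log 2 / Real.log (1/x))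
        (nhdsWithin 0 (Set.Ioi 0)) (nhds 1) by
          simpa using (tendsto_const_nhds.div_atTop hLtop).const_sub 1)
      filter_upwards [hmem] with x hx
      obtain ⟨_, hL, _⟩ := aux_pos hx.1 hx.2
      rw [aux_a hx.1, sub_div, div_self hL.ne']
    have T2 : Tendsto (fun x:ℝ => Real.log (1/(2*x)) / Real.log (1 + 1/x))
        (nhdsWithin 0 (Set.Ioi 0)) (nhds 1) := by
      have hnum : Tendsto (fun x:ℝ => Real.log 2 + Real.log (1+x))
          (nhdsWithin 0 (Set.Ioi 0)) (nhds (Real.log 2)) := by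
        simpa using tendsto_const_nhds.add hdzero
      apply Tendsto.congr' _ (show Tendsto
        (fun x:ℝ => 1 - (Real.log 2 + Real.log (1+x)) / Real.log (1 + 1/x))
        (nhdsWithin 0 (Set.Ioi 0)) (nhds 1) by
          simpa using (hnum.div_atTop hmtop).const_sub 1)
      filter_upwards [hmem] with x hx
      obtain ⟨_, _, hm⟩ := aux_pos hx.1 hx.2
      have k : Real.log (1/(2*x)) = Real.log (1 + 1/x) - (Real.log 2 + Real.log (1+x)) := by
        rw [aux_a hx.1, aux_m hx.1]; ring
      rw [k, sub_div, div_self hm.ne']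
    have Tfin := ((tendsto_const_nhds (x := (2:ℝ)/3)
      (f := nhdsWithin (0:ℝ) (Set.Ioi 0))).mul T1).mul T2.sqrt
    have h23 : ((2:ℝ)/3) * 1 * Real.sqrt 1 = 2/3 := by rw [Real.sqrt_one]; ring
    rw [h23] at Tfin
    apply Tendsto.congr' _ Tfin
    filter_upwards [hmem] with x hx
    exact (aux_eq hx.1 hx.2).symm
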